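/- Let d ≥ 2 and σ_d(θ) = dθ on ℝ/ℤ. If G' ⊂ ℝ/ℤ is a closed set whose convex hull G (in the closed disk) is a σ_d-periodic gap of period n (σ_dⁿ maps G' onto itself as a laminational set), then every edge of G is either preperiodic or precritical under σ_d; that is, for each edge ℓ = \overline{ab} of G, either some forward image σ_d^k(ℓ) is degenerate (σ_d^k(a) = σ_d^k(b)), or a and b are preperiodic. -/

import Mathlib

open Metric Set

noncomputable section

instance : Fact ((0:ℝ) < 1) := ⟨one_pos⟩

/-- The point on the unit circle in `ℂ` corresponding to `x ∈ ℝ/ℤ`, i.e. `exp(2πix)`. -/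
noncomputable def pt (x : AddCircle (1:ℝ)) : ℂ := (AddCircle.toCircle x : ℂ)

/-- The chord of the closed unit disk joining `pt a` and `pt b`. -/
noncomputable def chord (a b : AddCircle (1:ℝ)) : Set ℂ := segment ℝ (pt a) (pt b)

/-- The map `θ ↦ dθ` on `ℝ/ℤ`. -/
def sig (d : ℕ) (x : AddCircle (1:ℝ)) : AddCircle (1:ℝ) := d • x

/-- Two chords are linked (cross) if they are distinct and intersect in the open unit disk. -/
def Linked (a b x y : AddCircle (1:ℝ)) : Prop :=
  chord a b ≠ chord x y ∧ (chord a b ∩ chord x y ∩ Metric.ball (0:ℂ) 1).Nonempty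

/-- The representative of `x ∈ ℝ/ℤ` in `[0,1)`. -/
noncomputable def rep (x : AddCircle (1:ℝ)) : ℝ := ((AddCircle.equivIco 1 0) x : ℝ)

/-- The open positively oriented arc from `a` to `b`. -/
def arc (a b : AddCircle (1:ℝ)) : Set (AddCircle (1:ℝ)) :=
  {x | 0 < rep (x - a) ∧ rep (x - a) < rep (b - a)}

/-- The closed positively oriented arc from `a` to `b`. -/
def closedArc (a b : AddCircle (1:ℝ)) : Set (AddCircle (1:ℝ)) := arc a b ∪ {a, b}

/-- `(a,b)` is a hole of `A`: `a, b ∈ A` and the nonempty open arc `(a,b)` misses `A`. -/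
def IsHole (A : Set (AddCircle (1:ℝ))) (a b : AddCircle (1:ℝ)) : Prop :=
  a ∈ A ∧ b ∈ A ∧ (arc a b).Nonempty ∧ arc a b ∩ A = ∅

/-- The convex hull in `ℂ` of the set of circle points corresponding to `A ⊆ ℝ/ℤ`. -/
noncomputable def hull (A : Set (AddCircle (1:ℝ))) : Set ℂ := convexHull ℝ (pt '' A)

/-- `p, q, r` are distinct and in strict positive circular order. -/
def cyc (p q r : AddCircle (1:ℝ)) : Prop := 0 < rep (q - p) ∧ rep (q - p) < rep (r - p)

/-- A tuple of circle points is in (weak) positive circular order. -/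
def CircOrd {k : ℕ} [NeZero k] (v : Fin k → AddCircle (1:ℝ)) : Prop :=
  Monotone fun i => rep (v i - v 0)

lemma rep_coe (r : ℝ) : rep (r : AddCircle (1:ℝ)) = Int.fract r := by
  simp [rep, AddCircle.coe_equivIco_mk_apply]

lemma coe_rep (x : AddCircle (1:ℝ)) : ((rep x : ℝ) : AddCircle (1:ℝ)) = x := by
  exact (AddCircle.equivIco 1 0).symm_apply_apply x

lemma rep_mem (x : AddCircle (1:ℝ)) : rep x ∈ Ico (0:ℝ) 1 := by
  simpa [rep] using ((AddCircle.equivIco 1 0) x).2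

lemma rep_eq_zero_iff {x : AddCircle (1:ℝ)} : rep x = 0 ↔ x = 0 := by
  constructor
  · intro h
    have := coe_rep x
    rw [h] at this
    simpa using this.symm
  · rintro rfl
    have : ((0:ℝ) : AddCircle (1:ℝ)) = 0 := by norm_num
    rw [← this, rep_coe]; simp

lemma rep_injective {x y : AddCircle (1:ℝ)} (h : rep x = rep y) : x = y := by
  rw [← coe_rep x, ← coe_rep y, h]
lemma sig_iterate (d i : ℕ) (x : AddCircle (1:ℝ)) : (sig d)^[i] x = (d ^ i) • x := by
  induction i with
  | zero => simp
  | succ i ih => rw [Function.iterate_succ_apply', ih, sig, pow_succ, mul_comm, mul_smul]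

lemma coe_nsmul (n : ℕ) (r : ℝ) :
    (n • (r : AddCircle (1:ℝ))) = ((n * r : ℝ) : AddCircle (1:ℝ)) := by
  rw [← QuotientAddGroup.mk_nsmul, nsmul_eq_mul]

lemma fract_nat_mul (d : ℕ) (x : ℝ) : Int.fract (d * x) = Int.fract (d * Int.fract x) := by
  conv_lhs => rw [← Int.fract_add_floor x]
  rw [mul_add, mul_comm (d:ℝ) (⌊x⌋ : ℝ), ← Int.cast_natCast d, ← Int.cast_mul, Int.fract_add_intCast]

lemma rep_sub (x y : AddCircle (1:ℝ)) : rep (x - y) = Int.fract (rep x - rep y) := by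
  conv_lhs => rw [← coe_rep x, ← coe_rep y]
  rw [← QuotientAddGroup.mk_sub, rep_coe]

lemma fract_sub_lt {u v : ℝ} (h0u : 0 ≤ u) (h0v : 0 ≤ v) (hv : v < 1) (h : u < v) :
    Int.fract (u - v) = u - v + 1 := by
  have hf : ⌊u - v⌋ = -1 := by
    apply Int.floor_eq_iff.mpr
    constructor <;> push_cast <;> linarith
  rw [Int.fract, hf]
  push_cast
  ring

lemma fract_sub_ge {u v : ℝ} (hu : u < 1) (h0v : 0 ≤ v) (h : v ≤ u) :
    Int.fract (u - v) = u - v :=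
  Int.fract_eq_self.mpr ⟨by linarith, by linarith⟩
/-- Two holes of the same set whose arcs intersect are equal. -/
lemma hole_unique {S : Set (AddCircle (1:ℝ))} {p q p' q' : AddCircle (1:ℝ)}
    (h1 : IsHole S p q) (h2 : IsHole S p' q')
    (hx : (arc p q ∩ arc p' q').Nonempty) : p = p' ∧ q = q' := by
  obtain ⟨x, hx1, hx2⟩ := hx
  obtain ⟨hp, hq, -, hint⟩ := h1
  obtain ⟨hp', hq', -, hint'⟩ := h2
  obtain ⟨ht0, htL⟩ := hx1
  obtain ⟨hs0, hsL⟩ := hx2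
  rcases eq_or_lt_of_le (rep_mem (p' - p)).1 with hu | hu
  · -- p = p'
    have hpp : p' - p = 0 := rep_eq_zero_iff.mp hu.symm
    have hpp' : p' = p := by rwa [sub_eq_zero] at hpp
    subst hpp'
    refine ⟨rfl, ?_⟩
    rcases lt_trichotomy (rep (q' - p')) (rep (q - p')) with h | h | h
    · exfalso
      have : q' ∈ arc p' q ∩ S := ⟨⟨hs0.trans hsL, h⟩, hq'⟩
      rw [hint] at this; exact this
    · have : q - p' = q' - p' := rep_injective (h.symm ▸ rfl)
      exact sub_left_injective this
    · exfalso
      have : q ∈ arc p' q' ∩ S := ⟨⟨ht0.trans htL, h⟩, hq⟩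
      rw [hint'] at this; exact this
  · exfalso
    have hu1 : rep (p' - p) < 1 := (rep_mem _).2
    have hnotin : p' ∉ arc p q := by
      intro hmem
      have : p' ∈ arc p q ∩ S := ⟨hmem, hp'⟩
      rw [hint] at this; exact this
    have hLu : rep (q - p) ≤ rep (p' - p) := by
      by_contra hcon
      exact hnotin ⟨hu, not_le.mp hcon⟩
    have htu : rep (x - p) < rep (p' - p) := htL.trans_le hLu
    have e1 : rep (x - p') = rep (x - p) - rep (p' - p) + 1 := by
      rw [show x - p' = (x - p) - (p' - p) by abel, rep_sub]
      exact fract_sub_lt (rep_mem _).1 (rep_mem _).1 hu1 htu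
    have e2 : rep (p - p') = 1 - rep (p' - p) := by
      have h0 : rep (0 : AddCircle (1:ℝ)) = 0 := rep_eq_zero_iff.mpr rfl
      rw [show p - p' = (0 : AddCircle (1:ℝ)) - (p' - p) by abel, rep_sub, h0]
      rw [fract_sub_lt le_rfl (rep_mem _).1 hu1 hu]
      ring
    have hmem : p ∈ arc p' q' ∩ S := by
      refine ⟨⟨?_, ?_⟩, hp⟩
      · rw [e2]; linarith
      · rw [e2]; rw [e1] at hsL; linarith
    rw [hint'] at hmem; exact hmem
lemma arc_eq_image (p q : AddCircle (1:ℝ)) :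
    arc p q = (fun r : ℝ => (r : AddCircle (1:ℝ))) '' Ioo (rep p) (rep p + rep (q - p)) := by
  ext x
  constructor
  · rintro ⟨h0, hL⟩
    refine ⟨rep p + rep (x - p), ⟨by linarith, by linarith⟩, ?_⟩
    show ((rep p + rep (x - p) : ℝ) : AddCircle (1:ℝ)) = x
    rw [AddCircle.coe_add, coe_rep, coe_rep]
    abel
  · rintro ⟨r, ⟨hr1, hr2⟩, rfl⟩
    have hL1 : rep (q - p) < 1 := (rep_mem _).2
    have e : rep ((r : AddCircle (1:ℝ)) - p) = r - rep p := by
      rw [show (r : AddCircle (1:ℝ)) - p = (r : AddCircle (1:ℝ)) - ((rep p : ℝ) : AddCircle (1:ℝ)) by rw [coe_rep],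
        ← QuotientAddGroup.mk_sub, rep_coe]
      exact Int.fract_eq_self.mpr ⟨by linarith, by linarith⟩
    exact ⟨by rw [e]; linarith, by rw [e]; linarith⟩

lemma isOpen_arc (p q : AddCircle (1:ℝ)) : IsOpen (arc p q) := by
  rw [arc_eq_image]
  exact QuotientAddGroup.isOpenMap_coe _ isOpen_Ioo

lemma volume_arc (p q : AddCircle (1:ℝ)) :
    MeasureTheory.volume (arc p q) = ENNReal.ofReal (rep (q - p)) := by
  have hmeas : MeasurableSet (arc p q) := (isOpen_arc p q).measurableSet
  rw [AddCircle.add_projection_respects_measure (1:ℝ) (rep p) hmeas]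
  have hL0 : (0:ℝ) ≤ rep (q - p) := (rep_mem _).1
  have hL1 : rep (q - p) < 1 := (rep_mem _).2
  have hset : QuotientAddGroup.mk ⁻¹' arc p q ∩ Ioc (rep p) (rep p + 1)
      = Ioo (rep p) (rep p + rep (q - p)) := by
    ext r
    simp only [Set.mem_inter_iff, Set.mem_preimage, Set.mem_Ioc, Set.mem_Ioo]
    constructor
    · rintro ⟨⟨h0, hL⟩, hr1, hr2⟩
      have e : rep ((r : AddCircle (1:ℝ)) - p) = Int.fract (r - rep p) := by
        rw [show (r : AddCircle (1:ℝ)) - p = (r : AddCircle (1:ℝ)) - ((rep p : ℝ) : AddCircle (1:ℝ)) by rw [coe_rep],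
          ← QuotientAddGroup.mk_sub, rep_coe]
      rw [e] at h0 hL
      rcases lt_or_eq_of_le hr2 with hlt | heq
      · rw [Int.fract_eq_self.mpr ⟨by linarith, by linarith⟩] at h0 hL
        exact ⟨hr1, by linarith⟩
      · exfalso
        rw [heq, show rep p + 1 - rep p = (1:ℝ) by ring, Int.fract_one] at h0
        exact lt_irrefl _ h0
    · rintro ⟨hr1, hr2⟩
      have e : rep ((r : AddCircle (1:ℝ)) - p) = r - rep p := by
        rw [show (r : AddCircle (1:ℝ)) - p = (r : AddCircle (1:ℝ)) - ((rep p : ℝ) : AddCircle (1:ℝ)) by rw [coe_rep],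
          ← QuotientAddGroup.mk_sub, rep_coe]
        exact Int.fract_eq_self.mpr ⟨by linarith, by linarith⟩
      exact ⟨⟨by rw [e]; linarith, by rw [e]; linarith⟩, hr1, by linarith⟩
  rw [hset, Real.volume_Ioo]
  congr 1
  ring
lemma hole_disjoint {S : Set (AddCircle (1:ℝ))} {p q p' q' : AddCircle (1:ℝ)}
    (h1 : IsHole S p q) (h2 : IsHole S p' q') (hne : ¬(p = p' ∧ q = q')) :
    Disjoint (arc p q) (arc p' q') := by
  rw [Set.disjoint_iff_inter_eq_empty]
  by_contra h
  exact hne (hole_unique h1 h2 (Set.nonempty_iff_ne_empty.mpr h))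

lemma rep_iter_sub (d i : ℕ) (a b : AddCircle (1:ℝ)) :
    rep ((sig d)^[i] b - (sig d)^[i] a) = Int.fract ((d:ℝ)^i * rep (b - a)) := by
  rw [sig_iterate, sig_iterate, ← smul_sub]
  conv_lhs => rw [← coe_rep (b - a), coe_nsmul, rep_coe]
  push_cast
  ring_nf

lemma image_npow (d n : ℕ) (A : Set (AddCircle (1:ℝ))) (hper : (sig d)^[n] '' A = A) :
    ∀ q : ℕ, (sig d)^[n * q] '' A = A := by
  intro q
  induction q with
  | zero => simp
  | succ q ih =>
    rw [show n * (q + 1) = n * q + n by ring, Function.iterate_add, Set.image_comp, hper, ih]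

lemma image_mod (d n : ℕ) (hn : 0 < n) (A : Set (AddCircle (1:ℝ)))
    (hper : (sig d)^[n] '' A = A) (i : ℕ) :
    (sig d)^[i] '' A = (sig d)^[i % n] '' A := by
  conv_lhs => rw [(Nat.mod_add_div i n).symm]
  rw [Function.iterate_add, Set.image_comp, image_npow d n A hper]

/-- every edge of a σ_d-periodic gap is preperiodic or precritical. -/
theorem stmt_2 (d n : ℕ) (hd : 2 ≤ d) (hn : 0 < n)
    (A : Set (AddCircle (1:ℝ))) (hA : IsClosed A)
    (hper : (sig d)^[n] '' A = A)
    (hdisjint : ∀ i j : ℕ, i < n → j < n → i ≠ j →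
      Disjoint (intrinsicInterior ℝ (hull ((sig d)^[i] '' A)))
        (intrinsicInterior ℝ (hull ((sig d)^[j] '' A))))
    (hhole : ∀ i : ℕ, ∀ a b, IsHole ((sig d)^[i] '' A) a b →
      sig d a = sig d b ∨ IsHole ((sig d)^[i+1] '' A) (sig d a) (sig d b))
    (a b : AddCircle (1:ℝ)) (hedge : IsHole A a b) :
    (∃ k : ℕ, (sig d)^[k] a = (sig d)^[k] b) ∨
    ((∃ m k : ℕ, 1 ≤ k ∧ (sig d)^[m + k] a = (sig d)^[m] a) ∧
     (∃ m k : ℕ, 1 ≤ k ∧ (sig d)^[m + k] b = (sig d)^[m] b)) := by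

  by_cases hc : ∃ k : ℕ, (sig d)^[k] a = (sig d)^[k] b
  · exact Or.inl hc
  right
  push_neg at hc
  set t₀ := rep (b - a) with ht₀
  set L : ℕ → ℝ := fun i => Int.fract ((d:ℝ)^i * t₀) with hL
  have hL_eq : ∀ i, rep ((sig d)^[i] b - (sig d)^[i] a) = L i := fun i => rep_iter_sub d i a b
  have hLpos : ∀ i, 0 < L i := by
    intro i
    rcases lt_or_eq_of_le (Int.fract_nonneg ((d:ℝ)^i * t₀)) with h | h
    · exact h
    · exfalso
      have : (sig d)^[i] b - (sig d)^[i] a = 0 := by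
        rw [← rep_eq_zero_iff, hL_eq]; exact h.symm
      exact hc i (sub_eq_zero.mp this).symm
  have hL1 : ∀ i, L i < 1 := fun i => Int.fract_lt_one _
  have hdR : (2:ℝ) ≤ (d:ℝ) := by exact_mod_cast hd
  set ε : ℝ := 1 / (d + 1) with hε
  have hεpos : 0 < ε := by positivity
  have hstep : ∀ i, L i < ε → L (i+1) = d * L i := by
    intro i h
    have h1 : (d:ℝ) * L i < 1 := by
      have : (d:ℝ) * L i < d * ε := by
        exact mul_lt_mul_of_pos_left h (by linarith)
      have h2 : (d:ℝ) * ε < 1 := by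
        rw [hε]
        rw [mul_one_div, div_lt_one (by linarith)]
        linarith
      linarith
    have : L (i+1) = Int.fract ((d:ℝ) * L i) := by
      rw [hL]
      simp only []
      rw [pow_succ, mul_comm ((d:ℝ)^i) (d:ℝ), mul_assoc, fract_nat_mul]
    rw [this, Int.fract_eq_self.mpr ⟨mul_nonneg (Nat.cast_nonneg d) (le_of_lt (hLpos i)), h1⟩]
  -- the set of times with big length is infinite
  have hbig : ∀ N : ℕ, ∃ i, N ≤ i ∧ ε ≤ L i := by
    intro N
    by_contra hno
    push_neg at hno
    have hgrow : ∀ k : ℕ, 2^k * L N ≤ L (N + k) := by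
      intro k
      induction k with
      | zero => simp
      | succ k ih =>
        have hlt : L (N + k) < ε := hno (N + k) (Nat.le_add_right _ _)
        have := hstep (N + k) hlt
        rw [show N + (k + 1) = (N + k) + 1 by ring, this]
        have h2 : 2 * L (N + k) ≤ (d:ℝ) * L (N + k) :=
          mul_le_mul_of_nonneg_right hdR (le_of_lt (hLpos _))
        calc (2:ℝ)^(k+1) * L N = 2 * (2^k * L N) := by ring
          _ ≤ 2 * L (N + k) := by linarith [hLpos (N+k), ih]
          _ ≤ (d:ℝ) * L (N + k) := h2
    obtain ⟨k, hk⟩ := pow_unbounded_of_one_lt (1 / L N) (one_lt_two (α := ℝ))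
    have : 1 < L (N + k) := by
      have h1 : 1 / L N * L N ≤ 2^k * L N :=
        mul_le_mul_of_nonneg_right (le_of_lt hk) (le_of_lt (hLpos N))
      rw [one_div_mul_cancel (ne_of_gt (hLpos N))] at h1
      have := hgrow k
      -- need strict: use hk strict
      have h2 : 1 / L N * L N < 2^k * L N :=
        mul_lt_mul_of_pos_right hk (hLpos N)
      rw [one_div_mul_cancel (ne_of_gt (hLpos N))] at h2
      linarith
    linarith [hL1 (N + k)]
  have hTinf : Set.Infinite {i : ℕ | ε ≤ L i} := by
    apply Set.infinite_of_not_bddAbove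
    rintro ⟨m, hm⟩
    obtain ⟨i, hi1, hi2⟩ := hbig (m + 1)
    have := hm hi2
    omega
  -- pass to a fixed residue class mod n
  haveI hT : Infinite {i : ℕ | ε ≤ L i} := Set.infinite_coe_iff.mpr hTinf
  obtain ⟨r, hrinf⟩ := Finite.exists_infinite_fiber
    (fun i : {i : ℕ | ε ≤ L i} => (⟨i.1 % n, Nat.mod_lt _ hn⟩ : Fin n))
  have hT'inf : Set.Infinite {i : ℕ | ε ≤ L i ∧ i % n = (r : ℕ)} := by
    haveI := hrinf
    apply Set.infinite_of_injective_forall_mem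
      (f := fun x : (fun i : {i : ℕ | ε ≤ L i} =>
        (⟨i.1 % n, Nat.mod_lt _ hn⟩ : Fin n)) ⁻¹' {r} => (x.1.1 : ℕ))
    · intro x y h
      exact Subtype.ext (Subtype.ext h)
    · intro x
      refine ⟨x.1.2, ?_⟩
      have := x.2
      simp only [Set.mem_preimage, Set.mem_singleton_iff] at this
      exact congrArg Fin.val this
  obtain ⟨F, hFsub, hFcard⟩ := hT'inf.exists_subset_card_eq (d + 2)
  -- all iterates give holes
  have hhole_all : ∀ i, IsHole ((sig d)^[i] '' A) ((sig d)^[i] a) ((sig d)^[i] b) := by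
    intro i
    induction i with
    | zero => simpa using hedge
    | succ i ih =>
      rcases hhole i _ _ ih with h | h
      · exfalso
        rw [← Function.iterate_succ_apply' (sig d) i a,
          ← Function.iterate_succ_apply' (sig d) i b] at h
        exact hc (i+1) h
      · rwa [← Function.iterate_succ_apply' (sig d) i a,
          ← Function.iterate_succ_apply' (sig d) i b] at h
  have hhole_r : ∀ i ∈ F, IsHole ((sig d)^[(r:ℕ)] '' A) ((sig d)^[i] a) ((sig d)^[i] b) := by
    intro i hi
    have := hhole_all i
    rwa [image_mod d n hn A hper i, (hFsub hi).2] at this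
  -- pigeonhole: either two equal pairs, or disjoint arcs with too much measure
  by_cases hrep2 : ∃ i ∈ F, ∃ j ∈ F, i < j ∧
      (sig d)^[i] a = (sig d)^[j] a ∧ (sig d)^[i] b = (sig d)^[j] b
  · obtain ⟨i, -, j, -, hij, ha2, hb2⟩ := hrep2
    exact ⟨⟨i, j - i, by omega, by rw [show i + (j - i) = j by omega]; exact ha2.symm⟩,
      ⟨i, j - i, by omega, by rw [show i + (j - i) = j by omega]; exact hb2.symm⟩⟩
  · exfalso
    have hdisj : (↑F : Set ℕ).PairwiseDisjoint
        (fun i => arc ((sig d)^[i] a) ((sig d)^[i] b)) := by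
      intro i hi j hj hij
      refine hole_disjoint (hhole_r i hi) (hhole_r j hj) ?_
      rintro ⟨hpa, hpb⟩
      rcases lt_or_gt_of_ne hij with h | h
      · exact hrep2 ⟨i, hi, j, hj, h, hpa, hpb⟩
      · exact hrep2 ⟨j, hj, i, hi, h, hpa.symm, hpb.symm⟩
    have hsum : MeasureTheory.volume (⋃ i ∈ F, arc ((sig d)^[i] a) ((sig d)^[i] b))
        = ∑ i ∈ F, MeasureTheory.volume (arc ((sig d)^[i] a) ((sig d)^[i] b)) :=
      MeasureTheory.measure_biUnion_finset hdisj
        (fun i _ => (isOpen_arc _ _).measurableSet)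
    have hlow : ∀ i ∈ F, ENNReal.ofReal ε
        ≤ MeasureTheory.volume (arc ((sig d)^[i] a) ((sig d)^[i] b)) := by
      intro i hi
      rw [volume_arc, hL_eq]
      exact ENNReal.ofReal_le_ofReal (hFsub hi).1
    have hchain : (F.card : ENNReal) * ENNReal.ofReal ε ≤ 1 := by
      calc (F.card : ENNReal) * ENNReal.ofReal ε
          = ∑ _i ∈ F, ENNReal.ofReal ε := by rw [Finset.sum_const, nsmul_eq_mul]
        _ ≤ ∑ i ∈ F, MeasureTheory.volume (arc ((sig d)^[i] a) ((sig d)^[i] b)) :=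
            Finset.sum_le_sum hlow
        _ = MeasureTheory.volume (⋃ i ∈ F, arc ((sig d)^[i] a) ((sig d)^[i] b)) := hsum.symm
        _ ≤ MeasureTheory.volume (Set.univ : Set (AddCircle (1:ℝ))) :=
            MeasureTheory.measure_mono (Set.subset_univ _)
        _ = 1 := by rw [AddCircle.measure_univ]; simp
    rw [hFcard] at hchain
    have hcast : ((d + 2 : ℕ) : ENNReal) = ENNReal.ofReal ((d:ℝ) + 2) := by
      rw [← ENNReal.ofReal_natCast]; norm_num
    have hnum : ((d + 2 : ℕ) : ENNReal) * ENNReal.ofReal ε = ENNReal.ofReal (((d:ℝ) + 2) * ε) := by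
      rw [hcast, ← ENNReal.ofReal_mul (by positivity)]
    rw [hnum, show (1 : ENNReal) = ENNReal.ofReal 1 by simp] at hchain
    have := ENNReal.ofReal_le_ofReal_iff (by norm_num) |>.mp hchain
    have hgt : (1:ℝ) < ((d:ℝ) + 2) * ε := by
      rw [hε, mul_one_div, lt_div_iff₀ (by positivity)]
      push_cast
      linarith
    linarith
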